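/- Let D be the presented group on two generators a, t with the single relator t·a⁻¹·a⁻¹·t·a·t⁻¹·a⁻¹·t⁻¹·a, and let E be the presented group on two generators a, c with the single relator a⁻¹·c·a·c⁻¹·a⁻¹·a⁻¹·c⁻¹·a·c. Then D and E are isomorphic as groups. -/

import Mathlib

/-- Relator for the two-generator presentation on `a = of 0`, `t = of 1`:
`t·a⁻¹·a⁻¹·t·a·t⁻¹·a⁻¹·t⁻¹·a`. -/
def relD : FreeGroup (Fin 2) :=
  let a := FreeGroup.of 0
  let t := FreeGroup.of 1
  t * a⁻¹ * a⁻¹ * t * a * t⁻¹ * a⁻¹ * t⁻¹ * a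

/-- Relator for Kawauchi's presentation of the figure-eight knot group on
generators `a = of 0`, `c = of 1`: `a⁻¹·c·a·c⁻¹·a⁻¹·a⁻¹·c⁻¹·a·c`. -/
def relE : FreeGroup (Fin 2) :=
  let a := FreeGroup.of 0
  let c := FreeGroup.of 1
  a⁻¹ * c * a * c⁻¹ * a⁻¹ * a⁻¹ * c⁻¹ * a * c

section aux
variable {α : Type*}

lemma mk_rel_eq_one {rels : Set (FreeGroup α)} {r : FreeGroup α} (hr : r ∈ rels) :
    PresentedGroup.mk rels r = 1 :=
  (QuotientGroup.eq_one_iff r).2 (Subgroup.subset_normalClosure hr)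

end aux

noncomputable abbrev D := PresentedGroup ({relD} : Set (FreeGroup (Fin 2)))
noncomputable abbrev E := PresentedGroup ({relE} : Set (FreeGroup (Fin 2)))

lemma relE_holds :
    ((PresentedGroup.of 0 : E)⁻¹ * PresentedGroup.of 1 * PresentedGroup.of 0 *
      (PresentedGroup.of 1)⁻¹ * (PresentedGroup.of 0)⁻¹ * (PresentedGroup.of 0)⁻¹ *
      (PresentedGroup.of 1)⁻¹ * PresentedGroup.of 0 * PresentedGroup.of 1) = 1 := by
  have h := mk_rel_eq_one (rels := {relE}) (Set.mem_singleton relE)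
  exact h

lemma relD_holds :
    ((PresentedGroup.of 1 : D) * (PresentedGroup.of 0)⁻¹ * (PresentedGroup.of 0)⁻¹ *
      PresentedGroup.of 1 * PresentedGroup.of 0 * (PresentedGroup.of 1)⁻¹ *
      (PresentedGroup.of 0)⁻¹ * (PresentedGroup.of 1)⁻¹ * PresentedGroup.of 0) = 1 := by
  have h := mk_rel_eq_one (rels := {relD}) (Set.mem_singleton relD)
  exact h

noncomputable def fGen : Fin 2 → E :=
  ![PresentedGroup.of 0, PresentedGroup.of 0 * (PresentedGroup.of 1)⁻¹ * (PresentedGroup.of 0)⁻¹]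

noncomputable def gGen : Fin 2 → D :=
  ![PresentedGroup.of 0, (PresentedGroup.of 0)⁻¹ * (PresentedGroup.of 1)⁻¹ * PresentedGroup.of 0]

lemma fRels : ∀ r ∈ ({relD} : Set (FreeGroup (Fin 2))), FreeGroup.lift fGen r = 1 := by
  intro r hr
  rw [Set.mem_singleton_iff] at hr
  subst hr
  set A : E := PresentedGroup.of 0 with hA
  set C : E := PresentedGroup.of 1 with hC
  have hE : A⁻¹ * C * A * C⁻¹ * A⁻¹ * A⁻¹ * C⁻¹ * A * C = 1 := relE_holds
  have : FreeGroup.lift fGen relD =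
      (C⁻¹ * A) * (A⁻¹ * C * A * C⁻¹ * A⁻¹ * A⁻¹ * C⁻¹ * A * C) * (C⁻¹ * A)⁻¹ := by
    simp only [relD, map_mul, map_inv, FreeGroup.lift_apply_of, fGen, Matrix.cons_val_zero,
      Matrix.cons_val_one, Matrix.head_cons, ← hA, ← hC]
    group
  rw [this, hE]
  group

lemma gRels : ∀ r ∈ ({relE} : Set (FreeGroup (Fin 2))), FreeGroup.lift gGen r = 1 := by
  intro r hr
  rw [Set.mem_singleton_iff] at hr
  subst hr
  set A : D := PresentedGroup.of 0 with hA
  set T : D := PresentedGroup.of 1 with hT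
  have hD : T * A⁻¹ * A⁻¹ * T * A * T⁻¹ * A⁻¹ * T⁻¹ * A = 1 := relD_holds
  have : FreeGroup.lift gGen relE =
      (T * A⁻¹ * A⁻¹ * T * A * T⁻¹ * A)⁻¹ *
        (T * A⁻¹ * A⁻¹ * T * A * T⁻¹ * A⁻¹ * T⁻¹ * A) *
        (T * A⁻¹ * A⁻¹ * T * A * T⁻¹ * A) := by
    simp only [relE, map_mul, map_inv, FreeGroup.lift_apply_of, gGen, Matrix.cons_val_zero,
      Matrix.cons_val_one, Matrix.head_cons, ← hA, ← hT]
    group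
  rw [this, hD]
  group

theorem stmt_4 :
    Nonempty (PresentedGroup ({relD} : Set (FreeGroup (Fin 2))) ≃*
      PresentedGroup ({relE} : Set (FreeGroup (Fin 2)))) := by
  let f : D →* E := PresentedGroup.toGroup fRels
  let g : E →* D := PresentedGroup.toGroup gRels
  have hgf : g.comp f = MonoidHom.id D := by
    ext i
    fin_cases i <;>
      simp [f, g, fGen, gGen, PresentedGroup.toGroup.of]
  have hfg : f.comp g = MonoidHom.id E := by
    ext i
    fin_cases i <;>
      simp [f, g, fGen, gGen, PresentedGroup.toGroup.of]
  exact ⟨MonoidHom.toMulEquiv f g hgf hfg⟩
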